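/- For every fixed σ > 0 and γ > 0, the Rashomon ratio tends to one as the class means move apart: lim_{μ→∞} R(μ) = 1, where R(μ) = (1/π)∫₀^π 1(E_{μ,σ}(θ) ≤ γ) dθ. -/

import Mathlib

open Classical MeasureTheory ProbabilityTheory

/-- `Φ`, the standard Gaussian cumulative distribution function. -/
noncomputable def Phi (x : ℝ) : ℝ := ((gaussianReal 0 1) (Set.Iic x)).toReal

/-- `E_{μ,σ}(θ)`: reducible error of the affine classifier `sign(sin(θ)x + cos(θ))` for the
antipodal equal-prior mixture of `N(−μ, σ²)` and `N(μ, σ²)`. -/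
noncomputable def redErr (μ σ θ : ℝ) : ℝ :=
  Phi (μ / σ) - (1 / 2) * Phi ((μ * Real.sin θ - Real.cos θ) / (σ * Real.sin θ))
    - (1 / 2) * Phi ((μ * Real.sin θ + Real.cos θ) / (σ * Real.sin θ))

/-- `R(μ) = (1/π) ∫₀^π 1(E_{μ,σ}(θ) ≤ γ) dθ`, the Rashomon ratio. -/
noncomputable def rashRatio (σ γ μ : ℝ) : ℝ :=
  (1 / Real.pi) * ∫ θ in (0 : ℝ)..Real.pi, (if redErr μ σ θ ≤ γ then (1 : ℝ) else 0)

open Real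

lemma Phi_mono : Monotone Phi := fun _ _ hxy =>
  ENNReal.toReal_mono (measure_ne_top _ _) (measure_mono (Set.Iic_subset_Iic.2 hxy))

lemma Phi_le_one (x : ℝ) : Phi x ≤ 1 := by
  have := prob_le_one (μ := gaussianReal 0 1) (s := Set.Iic x)
  simpa [Phi] using ENNReal.toReal_mono (by norm_num) this

lemma Phi_tendsto : Filter.Tendsto Phi Filter.atTop (nhds 1) := by
  have h := tendsto_measure_Iic_atTop (gaussianReal (0:ℝ) 1)
  have := (ENNReal.tendsto_toReal (by simp : (gaussianReal (0:ℝ) 1) Set.univ ≠ ⊤)).comp h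
  simp [Function.comp_def] at this
  exact this

lemma redErr_le_aux (μ σ θ ε : ℝ) (hσ : 0 < σ) (hε : 0 < ε) (hε2 : ε ≤ π/2)
    (h1 : ε ≤ θ) (h2 : θ ≤ π - ε) :
    redErr μ σ θ ≤ 1 - Phi (μ / σ - 1 / (σ * Real.sin ε)) := by
  have hπ := Real.pi_pos
  have hsε : 0 < Real.sin ε := Real.sin_pos_of_pos_of_lt_pi hε (by linarith)
  have hsθ : Real.sin ε ≤ Real.sin θ := by
    rcases le_total θ (π/2) with h | h
    · exact Real.sin_le_sin_of_le_of_le_pi_div_two (by linarith) h h1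
    · rw [← Real.sin_pi_sub θ]
      exact Real.sin_le_sin_of_le_of_le_pi_div_two (by linarith) (by linarith) (by linarith)
  have hsθ0 : 0 < Real.sin θ := lt_of_lt_of_le hsε hsθ
  have hd : 0 < σ * Real.sin θ := mul_pos hσ hsθ0
  have hdε : 0 < σ * Real.sin ε := mul_pos hσ hsε
  have hdd : σ * Real.sin ε ≤ σ * Real.sin θ := by
    exact mul_le_mul_of_nonneg_left hsθ hσ.le
  have hkey : ∀ c : ℝ, c ≤ 1 →
      μ / σ - 1 / (σ * Real.sin ε) ≤ (μ * Real.sin θ - c) / (σ * Real.sin θ) := by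
    intro c hc
    have heq : (μ * Real.sin θ - c) / (σ * Real.sin θ) = μ / σ - c / (σ * Real.sin θ) := by
      field_simp
    rw [heq]
    have h3 : c / (σ * Real.sin θ) ≤ 1 / (σ * Real.sin θ) :=
      (div_le_div_iff_of_pos_right hd).2 hc
    have h4 : 1 / (σ * Real.sin θ) ≤ 1 / (σ * Real.sin ε) :=
      one_div_le_one_div_of_le hdε hdd
    linarith
  have hA := Phi_mono (hkey (Real.cos θ) (Real.cos_le_one θ))
  have hB := Phi_mono (hkey (-Real.cos θ) (by linarith [Real.neg_one_le_cos θ]))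
  have hC := Phi_le_one (μ / σ)
  unfold redErr
  have : μ * Real.sin θ - -Real.cos θ = μ * Real.sin θ + Real.cos θ := by ring
  rw [this] at hB
  linarith

/-- For fixed `σ > 0` and `γ > 0`, the Rashomon ratio tends to `1` as the
class means move apart: `lim_{μ→∞} R(μ) = 1`. -/
theorem rashRatio_tendsto_one
    (σ γ : ℝ) (hσ : 0 < σ) (hγ : 0 < γ) :
    Filter.Tendsto (fun μ => rashRatio σ γ μ) Filter.atTop (nhds 1) := by
  have hπ := Real.pi_pos
  rw [Metric.tendsto_nhds]
  intro δ hδ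
  set ε := min (π * δ / 4) (π / 4) with hεdef
  have hε0 : 0 < ε := lt_min (by positivity) (by positivity)
  have hεπ2 : ε ≤ π / 2 := (min_le_right _ _).trans (by linarith)
  have hεδ : ε ≤ π * δ / 4 := min_le_left _ _
  have htend : Filter.Tendsto (fun μ : ℝ => μ / σ - 1 / (σ * Real.sin ε))
      Filter.atTop Filter.atTop := by
    apply Filter.tendsto_atTop_add_const_right
    exact Filter.Tendsto.atTop_div_const hσ Filter.tendsto_id
  have hPhi : ∀ᶠ μ in Filter.atTop, 1 - γ < Phi (μ / σ - 1 / (σ * Real.sin ε)) :=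
    (Phi_tendsto.comp htend).eventually (eventually_gt_nhds (by linarith))
  filter_upwards [hPhi] with μ hμ
  set f : ℝ → ℝ := fun θ => if redErr μ σ θ ≤ γ then (1 : ℝ) else 0 with hf
  -- measurability
  have m1 : Measurable fun θ : ℝ => (μ * Real.sin θ - Real.cos θ) / (σ * Real.sin θ) :=
    ((measurable_const.mul Real.measurable_sin).sub Real.measurable_cos).div
      (measurable_const.mul Real.measurable_sin)
  have m2 : Measurable fun θ : ℝ => (μ * Real.sin θ + Real.cos θ) / (σ * Real.sin θ) :=
    ((measurable_const.mul Real.measurable_sin).add Real.measurable_cos).div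
      (measurable_const.mul Real.measurable_sin)
  have hred : Measurable fun θ => redErr μ σ θ := by
    unfold redErr
    exact ((measurable_const.sub ((Phi_mono.measurable.comp m1).const_mul (1/2))).sub
      ((Phi_mono.measurable.comp m2).const_mul (1/2)))
  have hfmeas : Measurable f :=
    Measurable.ite (measurableSet_le hred measurable_const) measurable_const measurable_const
  have hint : ∀ a b : ℝ, IntervalIntegrable f MeasureTheory.volume a b := by
    intro a b
    apply (intervalIntegrable_const (c := (1 : ℝ))).mono_fun
      hfmeas.aestronglyMeasurable
    refine MeasureTheory.ae_of_all _ fun θ => ?_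
    simp only [hf, Real.norm_eq_abs]
    split_ifs <;> norm_num
  have hnn : ∀ θ : ℝ, 0 ≤ f θ := fun θ => by
    simp only [hf]; split_ifs <;> norm_num
  have hle1 : ∀ θ : ℝ, f θ ≤ 1 := fun θ => by
    simp only [hf]; split_ifs <;> norm_num
  have hone : Set.EqOn f 1 (Set.uIcc ε (π - ε)) := by
    intro θ hθ
    rw [Set.uIcc_of_le (by linarith)] at hθ
    have := redErr_le_aux μ σ θ ε hσ hε0 hεπ2 hθ.1 hθ.2
    have : redErr μ σ θ ≤ γ := by linarith
    simp [hf, this]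
  -- integral bounds
  have hIup : ∫ θ in (0:ℝ)..π, f θ ≤ π := by
    have := intervalIntegral.integral_mono_on (μ := MeasureTheory.volume) hπ.le (hint 0 π)
      intervalIntegrable_const (fun θ _ => hle1 θ)
    simpa using this
  have hmid : ∫ θ in ε..(π - ε), f θ = π - 2 * ε := by
    rw [intervalIntegral.integral_congr hone]
    simp
    ring
  have hs1 : (∫ θ in (0:ℝ)..ε, f θ) + ∫ θ in ε..(π - ε), f θ = ∫ θ in (0:ℝ)..(π - ε), f θ :=
    intervalIntegral.integral_add_adjacent_intervals (hint 0 ε) (hint ε (π - ε))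
  have hs2 : (∫ θ in (0:ℝ)..(π - ε), f θ) + ∫ θ in (π - ε)..π, f θ = ∫ θ in (0:ℝ)..π, f θ :=
    intervalIntegral.integral_add_adjacent_intervals (hint 0 (π - ε)) (hint (π - ε) π)
  have hn1 : 0 ≤ ∫ θ in (0:ℝ)..ε, f θ :=
    intervalIntegral.integral_nonneg hε0.le (fun u _ => hnn u)
  have hn2 : 0 ≤ ∫ θ in (π - ε)..π, f θ :=
    intervalIntegral.integral_nonneg (by linarith) (fun u _ => hnn u)
  have hIlow : π - 2 * ε ≤ ∫ θ in (0:ℝ)..π, f θ := by linarith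
  -- conclude
  have hinv : 0 < 1 / π := by positivity
  have hπmul : (1 / π) * π = 1 := by field_simp
  rw [Real.dist_eq, abs_lt]
  have hR : rashRatio σ γ μ = (1 / π) * ∫ θ in (0:ℝ)..π, f θ := rfl
  constructor
  · rw [hR]
    nlinarith [mul_le_mul_of_nonneg_left hIlow hinv.le,
      mul_le_mul_of_nonneg_left hεδ hinv.le]
  · rw [hR]
    nlinarith [mul_le_mul_of_nonneg_left hIup hinv.le]
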